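/- arXiv:2005.13505 — 2 statements merged into one kernel-verified Lean document; each statement's English description precedes it below -/
import Mathlib

section
/- Definitions D1 and D2 of the box distance agree: for metric measure spaces X = (X,d,μ) and X' = (X',d',μ') and ε > 0, there exist measure-preserving maps φ: ([0,1], Leb) → (X,μ) and φ': ([0,1], Leb) → (X',μ') and a set W ⊆ [0,1] with Leb(W) ≤ aε such that |d(φ(x₁),φ(x₂)) − d'(φ'(x₁),φ'(x₂))| ≤ ε for all x₁, x₂ ∈ [0,1] \ W, if and only if there exist a Borel relation R ⊆ X × X' and a coupling ν of μ and μ' with ν(R) ≥ 1 − aε such that (x₁,x₁'), (x₂,x₂') ∈ R implies |d(x₁,x₂) − d'(x₁',x₂')| ≤ ε. -/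
open MeasureTheory Metric Set Filter Topology ProbabilityTheory
open scoped ENNReal


/-- Quantile transform: any probability measure on `ℝ` is the pushforward of
Lebesgue measure on `[0,1]`. -/
lemma aux_quantile (m : Measure ℝ) [IsProbabilityMeasure m] :
    ∃ g : ℝ → ℝ, MeasurePreserving g (volume.restrict (Set.Icc (0:ℝ) 1)) m := by
  classical
  set F : StieltjesFunction ℝ := ProbabilityTheory.cdf m with hF
  set g : ℝ → ℝ := fun t => sInf {x | t ≤ F x} with hgdef
  have key : ∀ t ∈ Ioo (0:ℝ) 1, ∀ x : ℝ, g t ≤ x ↔ t ≤ F x := by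
    intro t ht x
    obtain ⟨ht0, ht1⟩ := ht
    have hne : {x | t ≤ F x}.Nonempty := by
      obtain ⟨y, hy⟩ := ((tendsto_cdf_atTop m).eventually_mem (Ioi_mem_nhds ht1)).exists
      exact ⟨y, show t ≤ F y from le_of_lt hy⟩
    have hbdd : BddBelow {x | t ≤ F x} := by
      obtain ⟨y, hy⟩ := ((tendsto_cdf_atBot m).eventually_mem (Iio_mem_nhds ht0)).exists
      refine ⟨y, fun z hz => ?_⟩
      by_contra hzy
      push_neg at hzy
      exact absurd (le_trans hz (F.mono hzy.le)) (not_le.mpr hy)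
    constructor
    · intro hgx
      have hstep : ∀ y ∈ Ioi x, t ≤ F y := by
        intro y hy
        obtain ⟨z, hz, hzy⟩ := exists_lt_of_csInf_lt hne (lt_of_le_of_lt hgx hy)
        exact le_trans hz (F.mono hzy.le)
      have htend : Tendsto F (𝓝[>] x) (𝓝 (F x)) :=
        (F.right_continuous x).mono_left (nhdsWithin_mono x Ioi_subset_Ici_self)
      exact ge_of_tendsto htend (eventually_nhdsWithin_of_forall hstep)
    · intro hx
      exact csInf_le hbdd hx
  set c : ℝ := g (1/2) with hcdef
  set g' : ℝ → ℝ := fun t => if t ∈ Ioo (0:ℝ) 1 then g t else c with hg'def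
  have hmeas : Measurable g' := by
    apply measurable_of_Iic
    intro x
    have hset : g' ⁻¹' Iic x =
        (Ioo (0:ℝ) 1 ∩ Iic (F x)) ∪ ((Ioo (0:ℝ) 1)ᶜ ∩ {t : ℝ | c ≤ x}) := by
      ext t
      by_cases ht : t ∈ Ioo (0:ℝ) 1
      · have hgt : g' t = g t := if_pos ht
        simp only [mem_preimage, mem_Iic, hgt, key t ht x, mem_union, mem_inter_iff,
          mem_compl_iff, mem_setOf_eq]
        tauto
      · have hgt : g' t = c := if_neg ht
        simp only [mem_preimage, mem_Iic, hgt, mem_union, mem_inter_iff, mem_compl_iff,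
          mem_setOf_eq]
        tauto
    rw [hset]
    refine (measurableSet_Ioo.inter measurableSet_Iic).union
      (measurableSet_Ioo.compl.inter ?_)
    by_cases hcx : c ≤ x
    · simpa [hcx] using MeasurableSet.univ
    · simpa [hcx] using MeasurableSet.empty
  refine ⟨g', hmeas, ?_⟩
  have hres : volume.restrict (Set.Icc (0:ℝ) 1) = volume.restrict (Ioo (0:ℝ) 1) :=
    (Measure.restrict_congr_set Ioo_ae_eq_Icc).symm
  rw [hres]
  haveI hprob : IsProbabilityMeasure (volume.restrict (Ioo (0:ℝ) 1)) := by
    constructor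
    simp [Real.volume_Ioo]
  haveI : IsProbabilityMeasure ((volume.restrict (Ioo (0:ℝ) 1)).map g') :=
    Measure.isProbabilityMeasure_map hmeas.aemeasurable
  refine Measure.ext_of_Iic _ _ (fun x => ?_)
  rw [Measure.map_apply hmeas measurableSet_Iic,
      Measure.restrict_apply (hmeas measurableSet_Iic)]
  have hset : g' ⁻¹' Iic x ∩ Ioo 0 1 = Ioo (0:ℝ) 1 ∩ Iic (F x) := by
    ext t
    constructor
    · rintro ⟨h1, h2⟩
      have hgt : g' t = g t := if_pos h2
      refine ⟨h2, (key t h2 x).mp ?_⟩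
      rwa [mem_preimage, mem_Iic, hgt] at h1
    · rintro ⟨h2, h1⟩
      have hgt : g' t = g t := if_pos h2
      refine ⟨?_, h2⟩
      rw [mem_preimage, mem_Iic, hgt]
      exact (key t h2 x).mpr h1
  rw [hset]
  have h0 : 0 ≤ F x := cdf_nonneg m x
  have h1 : F x ≤ 1 := cdf_le_one m x
  have hvol : volume (Ioo (0:ℝ) 1 ∩ Iic (F x)) = ENNReal.ofReal (F x) := by
    rcases lt_or_ge (F x) 1 with hlt | hge
    · have : Ioo (0:ℝ) 1 ∩ Iic (F x) = Ioc 0 (F x) := by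
        ext t
        constructor
        · rintro ⟨⟨ha', hb⟩, hc⟩
          exact ⟨ha', hc⟩
        · rintro ⟨ha', hc⟩
          exact ⟨⟨ha', lt_of_le_of_lt hc hlt⟩, hc⟩
      rw [this, Real.volume_Ioc]
      simp
    · have hfx : F x = 1 := le_antisymm h1 hge
      have : Ioo (0:ℝ) 1 ∩ Iic (F x) = Ioo 0 1 := by
        rw [hfx]
        exact inter_eq_self_of_subset_left (fun t ht => le_of_lt ht.2)
      rw [this, Real.volume_Ioo, hfx]
      simp
  rw [hvol]
  exact ofReal_cdf m x

/-- Any probability measure on a standard Borel space is the pushforward of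
Lebesgue measure on `[0,1]`. -/
lemma aux_exists_mp {Y : Type*} [MeasurableSpace Y] [StandardBorelSpace Y] [Nonempty Y]
    (ν : Measure Y) [IsProbabilityMeasure ν] :
    ∃ ψ : ℝ → Y, MeasurePreserving ψ (volume.restrict (Set.Icc (0:ℝ) 1)) ν := by
  classical
  obtain ⟨f, hf⟩ := exists_measurableEmbedding_real Y
  haveI hm : IsProbabilityMeasure (ν.map f) :=
    Measure.isProbabilityMeasure_map hf.measurable.aemeasurable
  obtain ⟨g, hg⟩ := aux_quantile (ν.map f)
  set inv : ℝ → Y := Function.invFun f with hinvdef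
  have hoff : ∀ y : ℝ, y ∉ Set.range f → inv y = Classical.arbitrary Y := by
    intro y hy
    exact Function.invFun_neg (by simpa [Set.range] using hy)
  have hinvmeas : Measurable inv := by
    intro B hB
    by_cases hd : (Classical.arbitrary Y) ∈ B
    · have hset : inv ⁻¹' B = f '' B ∪ (Set.range f)ᶜ := by
        ext y
        by_cases hy : y ∈ Set.range f
        · obtain ⟨b, rfl⟩ := hy
          simp only [Set.mem_preimage, hinvdef, Function.leftInverse_invFun hf.injective b,
            Set.mem_union, Set.mem_compl_iff, hf.injective.mem_set_image]
          exact ⟨fun h => Or.inl h, fun h => h.elim id (fun h' => absurd ⟨b, rfl⟩ h')⟩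
        · simp only [Set.mem_preimage, hoff y hy, hd, Set.mem_union, Set.mem_compl_iff]
          exact ⟨fun _ => Or.inr hy, fun _ => trivial⟩
      rw [hset]
      exact (hf.measurableSet_image' hB).union hf.measurableSet_range.compl
    · have hset : inv ⁻¹' B = f '' B := by
        ext y
        by_cases hy : y ∈ Set.range f
        · obtain ⟨b, rfl⟩ := hy
          simp only [Set.mem_preimage, hinvdef, Function.leftInverse_invFun hf.injective b,
            hf.injective.mem_set_image]
        · simp only [Set.mem_preimage, hoff y hy]
          constructor
          · intro h
            exact absurd h hd
          · rintro ⟨b, -, rfl⟩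
            exact absurd ⟨b, rfl⟩ hy
      rw [hset]
      exact hf.measurableSet_image' hB
  have hψmeas : Measurable (inv ∘ g) := hinvmeas.comp hg.measurable
  set ν₀ := volume.restrict (Set.Icc (0:ℝ) 1) with hν₀def
  have hr : ν₀ (g ⁻¹' (Set.range f)ᶜ) = 0 := by
    rw [← Measure.map_apply hg.measurable hf.measurableSet_range.compl, hg.map_eq,
      Measure.map_apply hf.measurable hf.measurableSet_range.compl]
    simp
  have hae : (f ∘ (inv ∘ g)) =ᵐ[ν₀] g := by
    rw [Filter.EventuallyEq, ae_iff]
    refine measure_mono_null (fun t ht => ?_) hr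
    simp only [Set.mem_setOf_eq, Function.comp_apply] at ht
    simp only [Set.mem_preimage, Set.mem_compl_iff]
    intro hmem
    exact ht (Function.invFun_eq hmem)
  refine ⟨inv ∘ g, hψmeas, ?_⟩
  have hmap : (ν₀.map (inv ∘ g)).map f = ν.map f := by
    rw [Measure.map_map hf.measurable hψmeas, Measure.map_congr hae, hg.map_eq]
  have := congrArg (Measure.comap f) hmap
  rwa [hf.comap_map, hf.comap_map] at this

/-- Definitions D1 and D2 of the box distance agree, for a fixed `ε`. -/
theorem stmt5 {X X' : Type*}
    [MetricSpace X] [CompleteSpace X] [TopologicalSpace.SeparableSpace X]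
    [MeasurableSpace X] [BorelSpace X]
    [MetricSpace X'] [CompleteSpace X'] [TopologicalSpace.SeparableSpace X']
    [MeasurableSpace X'] [BorelSpace X']
    (μ : Measure X) (μ' : Measure X')
    [IsProbabilityMeasure μ] [IsProbabilityMeasure μ']
    (a ε : ℝ) (ha : 0 < a) (hε : 0 < ε) :
    (∃ (φ : ℝ → X) (φ' : ℝ → X') (W : Set ℝ),
      MeasurePreserving φ (volume.restrict (Set.Icc (0:ℝ) 1)) μ ∧
      MeasurePreserving φ' (volume.restrict (Set.Icc (0:ℝ) 1)) μ' ∧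
      W ⊆ Set.Icc (0:ℝ) 1 ∧ volume W ≤ ENNReal.ofReal (a * ε) ∧
      ∀ x₁ ∈ Set.Icc (0:ℝ) 1 \ W, ∀ x₂ ∈ Set.Icc (0:ℝ) 1 \ W,
        |dist (φ x₁) (φ x₂) - dist (φ' x₁) (φ' x₂)| ≤ ε) ↔
    (∃ (R : Set (X × X')) (ν : Measure (X × X')),
      MeasurableSet R ∧ IsProbabilityMeasure ν ∧
      ν.map Prod.fst = μ ∧ ν.map Prod.snd = μ' ∧
      1 - ENNReal.ofReal (a * ε) ≤ ν R ∧
      ∀ p ∈ R, ∀ q ∈ R, |dist p.1 q.1 - dist p.2 q.2| ≤ ε) := by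
  haveI : IsProbabilityMeasure (volume.restrict (Set.Icc (0:ℝ) 1)) := by
    constructor
    simp [Real.volume_Icc]
  constructor
  · rintro ⟨φ, φ', W, hφ, hφ', hWsub, hWvol, hdist⟩
    set ν₀ := volume.restrict (Set.Icc (0:ℝ) 1) with hν₀def
    set F : ℝ → X × X' := fun t => (φ t, φ' t) with hFdef
    have hFm : Measurable F := hφ.measurable.prodMk hφ'.measurable
    set S : Set ℝ := Set.Icc (0:ℝ) 1 \ W with hSdef
    refine ⟨closure (F '' S), ν₀.map F, isClosed_closure.measurableSet,
      Measure.isProbabilityMeasure_map hFm.aemeasurable, ?_, ?_, ?_, ?_⟩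
    · rw [Measure.map_map measurable_fst hFm]
      exact hφ.map_eq
    · rw [Measure.map_map measurable_snd hFm]
      exact hφ'.map_eq
    · rw [Measure.map_apply hFm isClosed_closure.measurableSet]
      have hsub : S ⊆ F ⁻¹' closure (F '' S) :=
        fun t ht => subset_closure (Set.mem_image_of_mem F ht)
      have hIcc : Set.Icc (0:ℝ) 1 ⊆ S ∪ W := fun t ht => by
        by_cases h : t ∈ W
        · exact Or.inr h
        · exact Or.inl ⟨ht, h⟩
      have h2 : (1:ℝ≥0∞) ≤ volume S + ENNReal.ofReal (a * ε) :=
        calc (1:ℝ≥0∞) = volume (Set.Icc (0:ℝ) 1) := by simp [Real.volume_Icc]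
          _ ≤ volume (S ∪ W) := measure_mono hIcc
          _ ≤ volume S + volume W := measure_union_le _ _
          _ ≤ volume S + ENNReal.ofReal (a * ε) := add_le_add_right hWvol _
      have h4 : ν₀ S = volume S := by
        rw [hν₀def, Measure.restrict_apply' measurableSet_Icc,
          Set.inter_eq_left.mpr Set.diff_subset]
      calc 1 - ENNReal.ofReal (a * ε) ≤ volume S := tsub_le_iff_right.mpr h2
        _ = ν₀ S := h4.symm
        _ ≤ ν₀ (F ⁻¹' closure (F '' S)) := measure_mono hsub
    · intro p hp q hq
      have hK : IsClosed {pq : (X × X') × (X × X') |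
          |dist pq.1.1 pq.2.1 - dist pq.1.2 pq.2.2| ≤ ε} := by
        refine isClosed_le ?_ continuous_const
        exact ((continuous_fst.fst.dist continuous_snd.fst).sub
          (continuous_fst.snd.dist continuous_snd.snd)).abs
      have hsub : closure (F '' S) ×ˢ closure (F '' S) ⊆ {pq : (X × X') × (X × X') |
          |dist pq.1.1 pq.2.1 - dist pq.1.2 pq.2.2| ≤ ε} := by
        rw [← closure_prod_eq]
        refine closure_minimal ?_ hK
        rintro ⟨p', q'⟩ ⟨⟨t1, ht1, rfl⟩, ⟨t2, ht2, rfl⟩⟩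
        exact hdist t1 ht1 t2 ht2
      exact hsub (Set.mk_mem_prod hp hq)
  · rintro ⟨R, ν, hRm, hνp, hν1, hν2, hνR, hRd⟩
    haveI : Nonempty X := by
      by_contra h
      rw [not_nonempty_iff] at h
      have h1 : (μ Set.univ) = 1 := measure_univ
      rw [Set.univ_eq_empty_iff.mpr h, measure_empty] at h1
      exact zero_ne_one h1
    haveI : Nonempty X' := by
      by_contra h
      rw [not_nonempty_iff] at h
      have h1 : (μ' Set.univ) = 1 := measure_univ
      rw [Set.univ_eq_empty_iff.mpr h, measure_empty] at h1
      exact zero_ne_one h1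
    obtain ⟨ψ, hψ⟩ := aux_exists_mp ν
    set ν₀ := volume.restrict (Set.Icc (0:ℝ) 1) with hν₀def
    refine ⟨fun t => (ψ t).1, fun t => (ψ t).2, Set.Icc 0 1 \ ψ ⁻¹' R, ?_, ?_,
      Set.diff_subset, ?_, ?_⟩
    · exact (MeasurePreserving.comp ⟨measurable_fst, hν1⟩ hψ : _)
    · exact (MeasurePreserving.comp ⟨measurable_snd, hν2⟩ hψ : _)
    · have h1 : Set.Icc (0:ℝ) 1 \ ψ ⁻¹' R = (ψ ⁻¹' R)ᶜ ∩ Set.Icc 0 1 :=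
        Set.diff_eq_compl_inter
      have h2 : ν₀ (ψ ⁻¹' R) = ν R := by
        rw [← Measure.map_apply hψ.measurable hRm, hψ.map_eq]
      have h3 : volume (Set.Icc (0:ℝ) 1 \ ψ ⁻¹' R) = ν₀ ((ψ ⁻¹' R)ᶜ) := by
        rw [h1, hν₀def, Measure.restrict_apply (hψ.measurable hRm).compl]
      have h4 : ν₀ ((ψ ⁻¹' R)ᶜ) = 1 - ν R := by
        rw [measure_compl (hψ.measurable hRm) (measure_ne_top _ _), measure_univ, h2]
      rw [h3, h4, tsub_le_iff_right]
      calc (1:ℝ≥0∞) ≤ (1 - ENNReal.ofReal (a * ε)) + ENNReal.ofReal (a * ε) := le_tsub_add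
        _ ≤ ν R + ENNReal.ofReal (a * ε) := add_le_add_left hνR _
        _ = ENNReal.ofReal (a * ε) + ν R := add_comm _ _
    · rintro x₁ ⟨hx₁, hx₁'⟩ x₂ ⟨hx₂, hx₂'⟩
      have h₁ : ψ x₁ ∈ R := by
        by_contra h
        exact hx₁' ⟨hx₁, h⟩
      have h₂ : ψ x₂ ∈ R := by
        by_contra h
        exact hx₂' ⟨hx₂, h⟩
      exact hRd _ h₁ _ h₂
end

section
/- For any complete separable metric measure spaces X and X' and any a > 0, the box distance with parameter a equals twice the Gromov–Prohorov distance with parameter 2a: □_a(X,X') = 2·d_GP^{2a}(X,X'). -/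
open MeasureTheory Metric

universe u v

/-- The box distance `□_a` (Definition D2). -/
noncomputable def boxDist {X : Type u} {X' : Type v}
    [MetricSpace X] [MeasurableSpace X] [MetricSpace X'] [MeasurableSpace X']
    (a : ℝ) (μ : Measure X) (μ' : Measure X') : ℝ :=
  sInf {ε : ℝ | 0 < ε ∧ ∃ (R : Set (X × X')) (ν : Measure (X × X')),
    MeasurableSet R ∧ IsProbabilityMeasure ν ∧
    ν.map Prod.fst = μ ∧ ν.map Prod.snd = μ' ∧
    1 - ENNReal.ofReal (a * ε) ≤ ν R ∧
    ∀ p ∈ R, ∀ q ∈ R, |dist p.1 q.1 - dist p.2 q.2| ≤ ε}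

/-- The Prohorov distance with parameter `a` between `ρ` and `ρ'` is at most `ε`. -/
def prohorovLE {Z : Type*} [MetricSpace Z] [MeasurableSpace Z]
    (a ε : ℝ) (ρ ρ' : Measure Z) : Prop :=
  ∀ B : Set Z, MeasurableSet B →
    ρ' B ≤ ρ (cthickening ε B) + ENNReal.ofReal (a * ε) ∧
    ρ B ≤ ρ' (cthickening ε B) + ENNReal.ofReal (a * ε)

/-- The Gromov–Prohorov distance with parameter `a` (Definition D3). -/
noncomputable def gromovProhorov {X : Type u} {X' : Type v}
    [MetricSpace X] [MeasurableSpace X] [MetricSpace X'] [MeasurableSpace X']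
    (a : ℝ) (μ : Measure X) (μ' : Measure X') : ℝ :=
  sInf {ε : ℝ | 0 < ε ∧ ∃ (Z : Type (max u v)) (_ : MetricSpace Z)
    (_ : MeasurableSpace Z) (_ : BorelSpace Z) (φ : X → Z) (φ' : X' → Z),
    Isometry φ ∧ Isometry φ' ∧ prohorovLE a ε (μ.map φ) (μ'.map φ')}

open Finset
open scoped Classical ENNReal NNReal

lemma intFlow {I J : Type} [Fintype I] [Fintype J] [DecidableEq I] [DecidableEq J]
    (n : I → ℕ) (m : J → ℕ) (E : I → J → Prop) (D : ℕ)
    (hHall : ∀ K : Finset I, ∀ NK : Finset J, (∀ i ∈ K, ∀ j, E i j → j ∈ NK) →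
      ∑ i ∈ K, n i ≤ (∑ j ∈ NK, m j) + D) :
    ∃ F : I → J → ℕ, (∀ i j, F i j ≠ 0 → E i j) ∧ (∀ i, ∑ j, F i j ≤ n i) ∧
      (∀ j, ∑ i, F i j ≤ m j) ∧ (∑ i, n i) ≤ (∑ i, ∑ j, F i j) + D := by
  classical
  set L := Σ i : I, Fin (n i) with hL
  set Rt := ((Σ j : J, Fin (m j)) ⊕ Fin D) with hRt
  set t : L → Finset Rt := fun l =>
    univ.filter (fun r => match r with | .inl s => E l.1 s.1 | .inr _ => True) with ht
  have hall : ∀ s : Finset L, s.card ≤ (s.biUnion t).card := by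
    intro s
    rcases s.eq_empty_or_nonempty with rfl | hs
    · simp
    set K := s.image Sigma.fst with hK
    have h1 : s.card ≤ ∑ i ∈ K, n i := by
      have hsub : s ⊆ K.sigma (fun i => (univ : Finset (Fin (n i)))) := by
        intro l hl
        rw [Finset.mem_sigma]
        exact ⟨Finset.mem_image.2 ⟨l, hl, rfl⟩, mem_univ _⟩
      calc s.card ≤ (K.sigma (fun i => (univ : Finset (Fin (n i))))).card :=
            card_le_card hsub
        _ = ∑ i ∈ K, n i := by rw [Finset.card_sigma]; simp
    set NK := univ.filter (fun j => ∃ i ∈ K, E i j) with hNK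
    have hNKmem : ∀ i ∈ K, ∀ j, E i j → j ∈ NK := by
      intro i hi j hE
      rw [hNK, Finset.mem_filter]
      exact ⟨mem_univ _, i, hi, hE⟩
    set W : Finset Rt :=
      ((NK.sigma (fun j => (univ : Finset (Fin (m j))))).image Sum.inl) ∪
        ((univ : Finset (Fin D)).image Sum.inr) with hW
    have hWsub : W ⊆ s.biUnion t := by
      intro r hr
      rw [hW, Finset.mem_union] at hr
      rcases hr with hr | hr
      · obtain ⟨p, hp, rfl⟩ := Finset.mem_image.1 hr
        rw [Finset.mem_sigma] at hp
        have hp1 : ∃ i ∈ K, E i p.1 := by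
          have := hp.1; rw [hNK, Finset.mem_filter] at this; exact this.2
        obtain ⟨i, hiK, hE⟩ := hp1
        obtain ⟨l, hls, hl1⟩ := Finset.mem_image.1 hiK
        refine Finset.mem_biUnion.2 ⟨l, hls, ?_⟩
        rw [ht]
        simp only [Finset.mem_filter, mem_univ, true_and]
        rw [hl1]; exact hE
      · obtain ⟨d, _, rfl⟩ := Finset.mem_image.1 hr
        obtain ⟨l, hls⟩ := hs
        refine Finset.mem_biUnion.2 ⟨l, hls, ?_⟩
        rw [ht]
        simp
    have hWcard : (∑ j ∈ NK, m j) + D = W.card := by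
      rw [hW, Finset.card_union_of_disjoint, card_image_of_injective _ Sum.inl_injective,
        card_image_of_injective _ Sum.inr_injective, Finset.card_sigma]
      · simp
      · simp only [Finset.disjoint_left, Finset.mem_image]
        rintro a ⟨p, _, rfl⟩ ⟨d, _, h⟩
        cases h
    calc s.card ≤ ∑ i ∈ K, n i := h1
      _ ≤ (∑ j ∈ NK, m j) + D := hHall K NK hNKmem
      _ = W.card := hWcard
      _ ≤ (s.biUnion t).card := card_le_card hWsub
  obtain ⟨f, hfinj, hft⟩ := (Finset.all_card_le_biUnion_card_iff_exists_injective t).1 hall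
  set g : Rt → Option J := fun r => match r with | .inl s => some s.1 | .inr _ => none with hg
  set F : I → J → ℕ := fun i j =>
    (univ.filter (fun k : Fin (n i) => g (f ⟨i, k⟩) = some j)).card with hF
  have helper : ∀ (P : L → Prop) [DecidablePred P],
      (univ.filter P).card = ∑ i, (univ.filter (fun k : Fin (n i) => P ⟨i, k⟩)).card := by
    intro P _
    rw [← Finset.card_sigma]
    congr 1
    ext ⟨i, k⟩
    rw [Finset.mem_sigma]
    simp
  -- support
  have hsupp : ∀ i j, F i j ≠ 0 → E i j := by
    intro i j h
    rw [hF] at h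
    obtain ⟨k, hk⟩ := Finset.card_ne_zero.1 h
    rw [Finset.mem_filter] at hk
    have hmem := hft ⟨i, k⟩
    rcases hfl : f ⟨i, k⟩ with s | d
    · rw [hfl] at hmem hk
      rw [ht, Finset.mem_filter] at hmem
      have : s.1 = j := by
        have := hk.2; rw [hg] at this; simpa using this
      rw [← this]; exact hmem.2
    · rw [hfl] at hk
      have := hk.2; rw [hg] at this; simp at this
  -- rows
  have hrow : ∀ i, (∑ j, F i j) +
      (univ.filter (fun k : Fin (n i) => g (f ⟨i, k⟩) = none)).card = n i := by
    intro i
    have hcf := Finset.card_eq_sum_card_fiberwise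
      (s := (univ : Finset (Fin (n i)))) (t := (univ : Finset (Option J)))
      (f := fun k => g (f ⟨i, k⟩)) (fun x _ => mem_univ _)
    have hopt : ∑ o ∈ (univ : Finset (Option J)),
        (univ.filter (fun k : Fin (n i) => g (f ⟨i, k⟩) = o)).card
        = (univ.filter (fun k : Fin (n i) => g (f ⟨i, k⟩) = none)).card + ∑ j, F i j := by
      rw [Fintype.sum_option]
    rw [Finset.card_univ, Fintype.card_fin] at hcf
    rw [add_comm]
    exact (hcf.trans hopt).symm
  -- columns
  have hcol : ∀ j, ∑ i, F i j ≤ m j := by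
    intro j
    have hc : ∑ i, F i j = (univ.filter (fun l : L => g (f l) = some j)).card := by
      rw [helper (fun l => g (f l) = some j)]
    rw [hc]
    set C := univ.filter (fun l : L => g (f l) = some j) with hC
    have himg : C.card = (C.image f).card := (card_image_of_injective _ hfinj).symm
    have hsub : C.image f ⊆ (univ : Finset (Fin (m j))).image
        (fun k => (Sum.inl ⟨j, k⟩ : Rt)) := by
      intro r hr
      obtain ⟨l, hl, rfl⟩ := Finset.mem_image.1 hr
      rw [hC, Finset.mem_filter] at hl
      rcases hfl : f l with s | d
      · rw [hfl] at hl
        have : s.1 = j := by have := hl.2; rw [hg] at this; simpa using this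
        rcases s with ⟨j', k⟩
        cases this
        exact Finset.mem_image.2 ⟨k, mem_univ _, rfl⟩
      · rw [hfl] at hl; have := hl.2; rw [hg] at this; simp at this
    calc C.card = (C.image f).card := himg
      _ ≤ ((univ : Finset (Fin (m j))).image (fun k => (Sum.inl ⟨j, k⟩ : Rt))).card :=
          card_le_card hsub
      _ ≤ (univ : Finset (Fin (m j))).card := card_image_le
      _ = m j := by simp
  -- total
  have hdum : (univ.filter (fun l : L => g (f l) = none)).card ≤ D := by
    set C := univ.filter (fun l : L => g (f l) = none) with hC
    have himg : C.card = (C.image f).card := (card_image_of_injective _ hfinj).symm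
    have hsub : C.image f ⊆ (univ : Finset (Fin D)).image (fun d => (Sum.inr d : Rt)) := by
      intro r hr
      obtain ⟨l, hl, rfl⟩ := Finset.mem_image.1 hr
      rw [hC, Finset.mem_filter] at hl
      rcases hfl : f l with s | d
      · rw [hfl] at hl; have := hl.2; rw [hg] at this; simp at this
      · exact Finset.mem_image.2 ⟨d, mem_univ _, rfl⟩
    calc C.card = (C.image f).card := himg
      _ ≤ ((univ : Finset (Fin D)).image (fun d => (Sum.inr d : Rt))).card := card_le_card hsub
      _ ≤ (univ : Finset (Fin D)).card := card_image_le
      _ = D := by simp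
  refine ⟨F, hsupp, fun i => ?_, hcol, ?_⟩
  · rw [← hrow i]; exact Nat.le_add_right _ _
  · have : ∑ i, n i = (∑ i, ∑ j, F i j) +
        ∑ i, (univ.filter (fun k : Fin (n i) => g (f ⟨i, k⟩) = none)).card := by
      rw [← Finset.sum_add_distrib]
      exact (Finset.sum_congr rfl (fun i _ => (hrow i).symm))
    rw [this]
    have := helper (fun l : L => g (f l) = none)
    rw [← this]
    exact Nat.add_le_add_left hdum _


lemma realFlow {I J : Type} [Fintype I] [Fintype J] (u : I → ℝ) (v : J → ℝ)
    (hu : ∀ i, 0 ≤ u i) (hv : ∀ j, 0 ≤ v j) (E : I → J → Prop) (α β : ℝ)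
    (hα : 0 ≤ α) (hβ : 0 < β)
    (hHall : ∀ K : Finset I, ∀ NK : Finset J, (∀ i ∈ K, ∀ j, E i j → j ∈ NK) →
      ∑ i ∈ K, u i ≤ (∑ j ∈ NK, v j) + α) :
    ∃ w : I → J → ℝ, (∀ i j, 0 ≤ w i j) ∧ (∀ i j, w i j ≠ 0 → E i j) ∧
      (∀ i, ∑ j, w i j ≤ u i) ∧ (∀ j, ∑ i, w i j ≤ v j) ∧
      (∑ i, u i) - α - β ≤ ∑ i, ∑ j, w i j := by
  classical
  obtain ⟨N, hN⟩ := exists_nat_gt (((Fintype.card I : ℝ) + Fintype.card J + 1) / β)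
  have hcard : (0:ℝ) < (Fintype.card I : ℝ) + Fintype.card J + 1 := by positivity
  have hN0 : (0:ℝ) < N := lt_trans (div_pos hcard hβ) hN
  have hNβ : (Fintype.card I : ℝ) + Fintype.card J + 1 ≤ N * β := by
    rw [div_lt_iff₀ hβ] at hN; linarith
  set n : I → ℕ := fun i => ⌊u i * N⌋₊ with hn
  set m : J → ℕ := fun j => ⌊v j * N⌋₊ with hm
  set D : ℕ := Fintype.card J + ⌈α * N⌉₊ with hD
  have hnle : ∀ i, (n i : ℝ) ≤ u i * N := fun i => Nat.floor_le (mul_nonneg (hu i) hN0.le)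
  have hngt : ∀ i, u i * N - 1 ≤ (n i : ℝ) := fun i => le_of_lt (Nat.sub_one_lt_floor _)
  have hmle : ∀ j, (m j : ℝ) ≤ v j * N := fun j => Nat.floor_le (mul_nonneg (hv j) hN0.le)
  have hmgt : ∀ j, v j * N ≤ (m j : ℝ) + 1 := fun j => le_of_lt (Nat.lt_floor_add_one _)
  have hHallN : ∀ K : Finset I, ∀ NK : Finset J, (∀ i ∈ K, ∀ j, E i j → j ∈ NK) →
      ∑ i ∈ K, n i ≤ (∑ j ∈ NK, m j) + D := by
    intro K NK hNK
    have hreal : (∑ i ∈ K, (n i : ℝ)) ≤ (∑ j ∈ NK, (m j : ℝ)) + D := by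
      have h1 : (∑ i ∈ K, (n i : ℝ)) ≤ ∑ i ∈ K, u i * N :=
        Finset.sum_le_sum (fun i _ => hnle i)
      have h2 : ∑ i ∈ K, u i * N = (∑ i ∈ K, u i) * N := by
        rw [← Finset.sum_mul]
      have h3 : (∑ i ∈ K, u i) * N ≤ ((∑ j ∈ NK, v j) + α) * N := by
        apply mul_le_mul_of_nonneg_right (hHall K NK hNK) (le_of_lt hN0)
      have h4 : (∑ j ∈ NK, v j) * N ≤ ∑ j ∈ NK, ((m j : ℝ) + 1) := by
        rw [Finset.sum_mul]
        exact Finset.sum_le_sum (fun j _ => hmgt j)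
      have h5 : ∑ j ∈ NK, ((m j : ℝ) + 1) = (∑ j ∈ NK, (m j : ℝ)) + NK.card := by
        rw [Finset.sum_add_distrib, Finset.sum_const, nsmul_eq_mul, mul_one]
      have h6 : (NK.card : ℝ) ≤ Fintype.card J := by
        exact_mod_cast Finset.card_le_card (Finset.subset_univ NK)
      have h7 : α * N ≤ ⌈α * N⌉₊ := Nat.le_ceil _
      have h8 : ((D : ℕ) : ℝ) = (Fintype.card J : ℝ) + ⌈α * N⌉₊ := by
        rw [hD]; push_cast; ring
      nlinarith [h1, h3, h4]
    exact_mod_cast hreal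
  obtain ⟨F, hFsupp, hFrow, hFcol, hFtot⟩ := intFlow n m E D hHallN
  refine ⟨fun i j => (F i j : ℝ) / N, fun i j => by positivity, ?_, ?_, ?_, ?_⟩
  · intro i j h
    exact hFsupp i j (fun h0 => h (by simp [h0]))
  · intro i
    rw [← Finset.sum_div, div_le_iff₀ hN0]
    calc (∑ j, (F i j : ℝ)) ≤ (n i : ℝ) := by exact_mod_cast hFrow i
      _ ≤ u i * N := hnle i
  · intro j
    rw [← Finset.sum_div, div_le_iff₀ hN0]
    calc (∑ i, (F i j : ℝ)) ≤ (m j : ℝ) := by exact_mod_cast hFcol j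
      _ ≤ v j * N := hmle j
  · have htotR : (∑ i, (n i : ℝ)) ≤ (∑ i, ∑ j, (F i j : ℝ)) + D := by
      exact_mod_cast hFtot
    have h2 : (∑ i, u i) * N - Fintype.card I ≤ ∑ i, (n i : ℝ) := by
      have := Finset.sum_le_sum (fun i (_ : i ∈ Finset.univ) => hngt i)
      rw [Finset.sum_sub_distrib, Finset.sum_const, nsmul_eq_mul, mul_one, ← Finset.sum_mul]
        at this
      simpa using this
    have h3 : (D : ℝ) ≤ α * N + 1 + Fintype.card J := by
      rw [hD]; push_cast
      have := Nat.ceil_lt_add_one (show (0:ℝ) ≤ α * N by positivity)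
      linarith
    have key : ((∑ i, u i) - α - β) * N ≤ ∑ i, ∑ j, (F i j : ℝ) := by
      nlinarith [htotR, h2, h3, hNβ]
    have : ∑ i, ∑ j, ((F i j : ℝ) / N) = (∑ i, ∑ j, (F i j : ℝ)) / N := by
      simp only [← Finset.sum_div]
    rw [this, le_div_iff₀ hN0]
    exact key

open MeasureTheory Metric
open scoped ENNReal NNReal


lemma exists_partition (X : Type*) [MetricSpace X] [TopologicalSpace.SeparableSpace X]
    [MeasurableSpace X] [BorelSpace X] (r : ℝ) (hr : 0 < r) :
    ∃ A : ℕ → Set X, (∀ n, MeasurableSet (A n)) ∧ Pairwise (Function.onFun Disjoint A) ∧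
      (⋃ n, A n) = Set.univ ∧ ∀ n, ∀ x ∈ A n, ∀ y ∈ A n, dist x y ≤ r := by
  rcases isEmpty_or_nonempty X with hX | hX
  · refine ⟨fun _ => ∅, fun _ => MeasurableSet.empty, by simp [Pairwise, Function.onFun], ?_, by simp⟩
    have : (Set.univ : Set X) = ∅ := Set.univ_eq_empty_iff.2 hX
    simp [this]
  · set e := TopologicalSpace.denseSeq X
    set B : ℕ → Set X := fun n => Metric.ball (e n) (r/2) with hB
    refine ⟨disjointed B, fun n => MeasurableSet.disjointed (fun i => measurableSet_ball) n,
      disjoint_disjointed B, ?_, ?_⟩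
    · rw [iUnion_disjointed]
      apply Set.eq_univ_of_forall
      intro x
      have hne : (Metric.ball x (r/2)).Nonempty := ⟨x, Metric.mem_ball_self (by linarith)⟩
      obtain ⟨n, hn⟩ := (TopologicalSpace.denseRange_denseSeq X).exists_mem_open
        Metric.isOpen_ball hne
      refine Set.mem_iUnion.2 ⟨n, ?_⟩
      rw [hB]
      simp only [Metric.mem_ball] at hn ⊢
      rw [dist_comm]
      exact hn
    · intro n x hx y hy
      have hx' : x ∈ B n := disjointed_subset B n hx
      have hy' : y ∈ B n := disjointed_subset B n hy
      rw [hB, Metric.mem_ball] at hx' hy'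
      calc dist x y ≤ dist x (e n) + dist (e n) y := dist_triangle _ _ _
        _ ≤ r/2 + r/2 := by rw [dist_comm (e n) y] at *; exact add_le_add hx'.le hy'.le
        _ = r := by ring
  

lemma map_finsetSum' {δ α β : Type*} [MeasurableSpace α] [MeasurableSpace β]
    (s : Finset δ) (ν : δ → Measure α) {f : α → β} (hf : Measurable f) :
    (∑ i ∈ s, ν i).map f = ∑ i ∈ s, (ν i).map f := by
  classical
  induction s using Finset.induction with
  | empty => simp [Measure.map_zero]
  | insert _ _ h ih =>
      rw [Finset.sum_insert h, Finset.sum_insert h, Measure.map_add _ _ hf, ih]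


lemma eq_of_le_of_univ_le {α : Type*} [MeasurableSpace α] {κ μ : Measure α}
    [IsFiniteMeasure μ] (h : κ ≤ μ) (hu : μ Set.univ ≤ κ Set.univ) : κ = μ := by
  ext s hs
  refine le_antisymm (Measure.le_iff'.1 h s) ?_
  have hc : κ sᶜ ≤ μ sᶜ := Measure.le_iff'.1 h sᶜ
  have hsum : μ s + μ sᶜ = μ Set.univ := measure_add_measure_compl hs
  have hsumκ : κ s + κ sᶜ = κ Set.univ := measure_add_measure_compl hs
  have hfin : μ sᶜ ≠ ⊤ := measure_ne_top μ sᶜ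
  have : μ s + μ sᶜ ≤ κ s + μ sᶜ := by
    rw [hsum]
    calc μ Set.univ ≤ κ Set.univ := hu
      _ = κ s + κ sᶜ := hsumκ.symm
      _ ≤ κ s + μ sᶜ := add_le_add_right hc _
  exact (ENNReal.add_le_add_iff_right hfin).1 this


lemma completion {X X' : Type*} [MeasurableSpace X] [MeasurableSpace X']
    (μ : Measure X) (μ' : Measure X') [IsProbabilityMeasure μ] [IsProbabilityMeasure μ']
    (ν₀ : Measure (X × X')) (hfst : ν₀.map Prod.fst ≤ μ) (hsnd : ν₀.map Prod.snd ≤ μ') :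
    ∃ ν : Measure (X × X'), IsProbabilityMeasure ν ∧ ν.map Prod.fst = μ ∧
      ν.map Prod.snd = μ' ∧ ∀ s, ν₀ s ≤ ν s := by
  haveI hfin : IsFiniteMeasure ν₀ := by
    constructor
    have h1 : ν₀ Set.univ = (ν₀.map Prod.fst) Set.univ := by
      rw [Measure.map_apply measurable_fst MeasurableSet.univ]; rfl
    rw [h1]
    exact lt_of_le_of_lt (le_trans (Measure.le_iff'.1 hfst Set.univ)
      (le_of_eq (measure_univ))) ENNReal.one_lt_top
  haveI h1 : IsFiniteMeasure (ν₀.map Prod.fst) := isFiniteMeasure_of_le μ hfst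
  haveI h2 : IsFiniteMeasure (ν₀.map Prod.snd) := isFiniteMeasure_of_le μ' hsnd
  set μ₁ := μ - ν₀.map Prod.fst with hμ₁
  set μ₁' := μ' - ν₀.map Prod.snd with hμ₁'
  set m := ν₀ Set.univ with hm
  have hmapfst_univ : (ν₀.map Prod.fst) Set.univ = m := by
    rw [Measure.map_apply measurable_fst MeasurableSet.univ]; rfl
  have hmapsnd_univ : (ν₀.map Prod.snd) Set.univ = m := by
    rw [Measure.map_apply measurable_snd MeasurableSet.univ]; rfl
  have hm1 : m ≤ 1 := by
    rw [← hmapfst_univ]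
    exact le_trans (Measure.le_iff'.1 hfst Set.univ) (le_of_eq measure_univ)
  have hμ₁univ : μ₁ Set.univ = 1 - m := by
    rw [hμ₁, Measure.sub_apply MeasurableSet.univ hfst, measure_univ, hmapfst_univ]
  have hμ₁'univ : μ₁' Set.univ = 1 - m := by
    rw [hμ₁', Measure.sub_apply MeasurableSet.univ hsnd, measure_univ, hmapsnd_univ]
  set c := (1 - m)⁻¹ with hc
  set ν := ν₀ + c • (μ₁.prod μ₁') with hν
  have hprodzero : m = 1 → c • (μ₁.prod μ₁') = 0 := by
    intro h
    have hz : (c • (μ₁.prod μ₁')) Set.univ = 0 := by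
      rw [Measure.smul_apply, ← Set.univ_prod_univ, Measure.prod_prod, hμ₁univ, h, tsub_self,
        zero_mul, smul_eq_mul, mul_zero]
    exact Measure.measure_univ_eq_zero.1 hz
  have hfst_eq : ν.map Prod.fst = μ := by
    rw [hν, Measure.map_add _ _ measurable_fst, Measure.map_smul,
      Measure.map_fst_prod, hμ₁'univ]
    rcases eq_or_ne m 1 with h | h
    · have heq : ν₀.map Prod.fst = μ :=
        eq_of_le_of_univ_le hfst (by rw [hmapfst_univ, h, measure_univ])
      have hz : c • ((1 - m) • μ₁) = 0 := by
        rw [h, tsub_self, zero_smul, smul_zero]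
      rw [hz, heq, add_zero]
    · have hne : 1 - m ≠ 0 := by
        intro h0
        exact h (le_antisymm hm1 (by rwa [tsub_eq_zero_iff_le] at h0))
      have hnetop : (1 : ℝ≥0∞) - m ≠ ⊤ :=
        ne_top_of_le_ne_top ENNReal.one_ne_top tsub_le_self
      have hcc : c • (1 - m) • μ₁ = μ₁ := by
        rw [smul_smul, hc, ENNReal.inv_mul_cancel hne hnetop, one_smul]
      rw [hcc, add_comm]
      exact Measure.sub_add_cancel_of_le hfst
  have hsnd_eq : ν.map Prod.snd = μ' := by
    rw [hν, Measure.map_add _ _ measurable_snd, Measure.map_smul,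
      Measure.map_snd_prod, hμ₁univ]
    rcases eq_or_ne m 1 with h | h
    · have heq : ν₀.map Prod.snd = μ' :=
        eq_of_le_of_univ_le hsnd (by rw [hmapsnd_univ, h, measure_univ])
      have hz : c • ((1 - m) • μ₁') = 0 := by
        rw [h, tsub_self, zero_smul, smul_zero]
      rw [hz, heq, add_zero]
    · have hne : 1 - m ≠ 0 := by
        intro h0
        exact h (le_antisymm hm1 (by rwa [tsub_eq_zero_iff_le] at h0))
      have hnetop : (1 : ℝ≥0∞) - m ≠ ⊤ :=
        ne_top_of_le_ne_top ENNReal.one_ne_top tsub_le_self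
      have hcc : c • (1 - m) • μ₁' = μ₁' := by
        rw [smul_smul, hc, ENNReal.inv_mul_cancel hne hnetop, one_smul]
      rw [hcc, add_comm]
      exact Measure.sub_add_cancel_of_le hsnd
  refine ⟨ν, ?_, hfst_eq, hsnd_eq, ?_⟩
  · constructor
    have h0 : ν Set.univ = (ν.map Prod.fst) Set.univ := by
      rw [Measure.map_apply measurable_fst MeasurableSet.univ]; rfl
    rw [h0, hfst_eq, measure_univ]
  · intro s
    rw [hν]
    simp only [Measure.add_apply]
    exact le_add_of_nonneg_right (zero_le)


lemma exists_truncation {Y : Type*} [MeasurableSpace Y] (κ : Measure Y) [IsProbabilityMeasure κ]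
    (C : ℕ → Set Y) (hcov : (⋃ n, C n) = Set.univ) {σ : ℝ} (hσ : 0 < σ) :
    ∃ M : ℕ, 1 - ENNReal.ofReal σ ≤ κ (⋃ i ∈ Finset.range M, C i) := by
  have h : Filter.Tendsto (fun n => κ (Set.accumulate C n)) Filter.atTop
      (nhds (κ (⋃ n, C n))) := MeasureTheory.tendsto_measure_iUnion_accumulate
  rw [hcov, measure_univ] at h
  have hlt : (1 : ℝ≥0∞) - ENNReal.ofReal σ < 1 := by
    apply ENNReal.sub_lt_self ENNReal.one_ne_top one_ne_zero
    simpa using hσ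
  have := h.eventually (eventually_gt_nhds hlt)
  obtain ⟨n, hn⟩ := this.exists
  refine ⟨n + 1, ?_⟩
  have heq : Set.accumulate C n = ⋃ i ∈ Finset.range (n+1), C i := by
    ext x
    simp [Set.mem_accumulate, Finset.mem_range, Nat.lt_succ_iff]
  rw [← heq]
  exact hn.le



lemma gp_to_box {X : Type u} {X' : Type v}
    [MetricSpace X] [TopologicalSpace.SeparableSpace X] [MeasurableSpace X] [BorelSpace X]
    [MetricSpace X'] [TopologicalSpace.SeparableSpace X'] [MeasurableSpace X'] [BorelSpace X']
    (μ : Measure X) (μ' : Measure X') [IsProbabilityMeasure μ] [IsProbabilityMeasure μ']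
    {a δ ζ : ℝ} (ha : 0 < a) (hδ : 0 < δ) (hζ : 0 < ζ)
    {Z : Type*} [MetricSpace Z] [MeasurableSpace Z] [BorelSpace Z]
    {φ : X → Z} {φ' : X' → Z} (hφ : Isometry φ) (hφ' : Isometry φ')
    (hP : prohorovLE (2*a) δ (μ.map φ) (μ'.map φ')) :
    ∃ (R : Set (X × X')) (ν : Measure (X × X')),
      MeasurableSet R ∧ IsProbabilityMeasure ν ∧
      ν.map Prod.fst = μ ∧ ν.map Prod.snd = μ' ∧
      1 - ENNReal.ofReal (a * (2*δ + ζ)) ≤ ν R ∧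
      ∀ p ∈ R, ∀ q ∈ R, |dist p.1 q.1 - dist p.2 q.2| ≤ 2*δ + ζ := by
  classical
  haveI : SecondCountableTopology X := UniformSpace.secondCountable_of_separable X
  haveI : SecondCountableTopology X' := UniformSpace.secondCountable_of_separable X'
  -- the relation
  set R : Set (X × X') := {p | dist (φ p.1) (φ' p.2) ≤ δ + ζ/2} with hR
  have hRmeas : MeasurableSet R := by
    have hcont : Continuous (fun p : X × X' => dist (φ p.1) (φ' p.2)) :=
      Continuous.dist (hφ.continuous.comp continuous_fst) (hφ'.continuous.comp continuous_snd)
    exact (isClosed_le hcont continuous_const).measurableSet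
  -- partitions
  obtain ⟨A, hAmeas, hAdisj, hAcov, hAdiam⟩ := exists_partition X (ζ/16) (by linarith)
  obtain ⟨A', hA'meas, hA'disj, hA'cov, hA'diam⟩ := exists_partition X' (ζ/16) (by linarith)
  set σ := a*ζ/8 with hσdef
  have hσ0 : 0 < σ := by positivity
  obtain ⟨M₁, hM₁⟩ := exists_truncation μ A hAcov hσ0
  obtain ⟨M₂, hM₂⟩ := exists_truncation μ' A' hA'cov hσ0
  set u : Fin M₁ → ℝ := fun i => (μ (A i)).toReal with hu
  set v : Fin M₂ → ℝ := fun j => (μ' (A' j)).toReal with hv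
  have hu0 : ∀ i, 0 ≤ u i := fun i => ENNReal.toReal_nonneg
  have hv0 : ∀ j, 0 ≤ v j := fun j => ENNReal.toReal_nonneg
  set E : Fin M₁ → Fin M₂ → Prop :=
    fun i j => ∃ x ∈ A (i:ℕ), ∃ x' ∈ A' (j:ℕ), dist (φ x) (φ' x') ≤ δ + ζ/4 with hE
  -- disjointness facts
  have hAdisjF : ∀ (s : Set X) (T : Finset (Fin M₁)),
      μ (⋃ i ∈ T, s ∩ A (i:ℕ)) = ∑ i ∈ T, μ (s ∩ A (i:ℕ)) → True := fun _ _ _ => trivial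
  -- Hall condition
  have hHall : ∀ K : Finset (Fin M₁), ∀ NK : Finset (Fin M₂),
      (∀ i ∈ K, ∀ j, E i j → j ∈ NK) →
      ∑ i ∈ K, u i ≤ (∑ j ∈ NK, v j) + (2*a*δ + σ) := by
    intro K NK hclosed
    set S := ⋃ i ∈ K, A (i:ℕ) with hS
    set B := Metric.thickening (ζ/16) (φ '' S) with hBdef
    have hBmeas : MeasurableSet B := Metric.isOpen_thickening.measurableSet
    have h1 : μ S ≤ (μ.map φ) B := by
      rw [Measure.map_apply hφ.continuous.measurable hBmeas]
      apply measure_mono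
      intro x hx
      exact Metric.self_subset_thickening (by linarith) (φ '' S) ⟨x, hx, rfl⟩
    have h2 := (hP B hBmeas).2
    have h3 : (μ'.map φ') (Metric.cthickening δ B) = μ' (φ' ⁻¹' Metric.cthickening δ B) :=
      Measure.map_apply hφ'.continuous.measurable Metric.isClosed_cthickening.measurableSet
    set U' := ⋃ j ∈ Finset.range M₂, A' j with hU'
    have hU'meas : MeasurableSet U' :=
      (Finset.range M₂).measurableSet_biUnion (fun j _ => hA'meas j)
    have hsub2 : φ' ⁻¹' Metric.cthickening δ B ⊆ (⋃ j ∈ NK, A' (j:ℕ)) ∪ U'ᶜ := by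
      intro x' hx'
      have h4 : EMetric.infEdist (φ' x') B ≤ ENNReal.ofReal δ :=
        (Metric.mem_cthickening_iff).1 hx'
      have h5 : EMetric.infEdist (φ' x') B < ENNReal.ofReal (δ + ζ/16) :=
        lt_of_le_of_lt h4 ((ENNReal.ofReal_lt_ofReal_iff (by linarith)).2 (by linarith))
      obtain ⟨z, hzB, hz⟩ := EMetric.infEdist_lt_iff.1 h5
      have hzdist : dist (φ' x') z < δ + ζ/16 := by
        rw [edist_dist] at hz
        exact (ENNReal.ofReal_lt_ofReal_iff (by linarith)).1 hz
      obtain ⟨w0, hwS, hwz⟩ := Metric.mem_thickening_iff.1 hzB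
      obtain ⟨s₀, hs₀S, rfl⟩ := hwS
      have hdist : dist (φ' x') (φ s₀) ≤ δ + ζ/8 := by
        have htri := dist_triangle (φ' x') z (φ s₀)
        linarith [hwz, hzdist, htri]
      obtain ⟨i, hi⟩ := Set.mem_iUnion.1 hs₀S
      obtain ⟨hiK, hs₀⟩ := Set.mem_iUnion.1 hi
      have hx'cov : x' ∈ ⋃ n, A' n := by rw [hA'cov]; trivial
      obtain ⟨j, hj⟩ := Set.mem_iUnion.1 hx'cov
      by_cases hjM : j < M₂
      · have hEij : E i ⟨j, hjM⟩ := by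
          refine ⟨s₀, hs₀, x', hj, ?_⟩
          rw [dist_comm]
          linarith
        exact Set.mem_union_left _
          (Set.mem_biUnion (hclosed i hiK ⟨j, hjM⟩ hEij) hj)
      · refine Set.mem_union_right _ ?_
        intro hxU
        obtain ⟨j', hj'⟩ := Set.mem_iUnion.1 hxU
        obtain ⟨hj'M, hxj'⟩ := Set.mem_iUnion.1 hj'
        rw [Finset.mem_range] at hj'M
        have hne : j' ≠ j := fun h => hjM (h ▸ hj'M)
        exact (hA'disj hne).le_bot ⟨hxj', hj⟩
    have htail : μ' U'ᶜ ≤ ENNReal.ofReal σ := by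
      rw [measure_compl hU'meas (measure_ne_top _ _), measure_univ]
      rw [tsub_le_iff_right]
      calc (1 : ℝ≥0∞) ≤ (1 - ENNReal.ofReal σ) + ENNReal.ofReal σ := le_tsub_add
        _ ≤ μ' U' + ENNReal.ofReal σ := add_le_add_left hM₂ _
        _ = ENNReal.ofReal σ + μ' U' := add_comm _ _
    have h6 : μ' (φ' ⁻¹' Metric.cthickening δ B) ≤
        μ' (⋃ j ∈ NK, A' (j:ℕ)) + ENNReal.ofReal σ :=
      calc μ' (φ' ⁻¹' Metric.cthickening δ B) ≤ μ' ((⋃ j ∈ NK, A' (j:ℕ)) ∪ U'ᶜ) :=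
            measure_mono hsub2
        _ ≤ μ' (⋃ j ∈ NK, A' (j:ℕ)) + μ' U'ᶜ := measure_union_le _ _
        _ ≤ _ := add_le_add_right htail _
    have hEN : μ S ≤ μ' (⋃ j ∈ NK, A' (j:ℕ)) + ENNReal.ofReal σ + ENNReal.ofReal (2*a*δ) := by
      calc μ S ≤ (μ.map φ) B := h1
        _ ≤ (μ'.map φ') (Metric.cthickening δ B) + ENNReal.ofReal (2*a*δ) := h2
        _ = μ' (φ' ⁻¹' Metric.cthickening δ B) + ENNReal.ofReal (2*a*δ) := by rw [h3]
        _ ≤ μ' (⋃ j ∈ NK, A' (j:ℕ)) + ENNReal.ofReal σ + ENNReal.ofReal (2*a*δ) :=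
            add_le_add_left h6 _
    -- convert to real
    have hμS : μ S = ∑ i ∈ K, μ (A (i:ℕ)) := by
      rw [hS]
      apply measure_biUnion_finset
      · intro i _ j _ hij
        exact hAdisj (Fin.val_injective.ne hij)
      · exact fun i _ => hAmeas _
    have hμNK : μ' (⋃ j ∈ NK, A' (j:ℕ)) = ∑ j ∈ NK, μ' (A' (j:ℕ)) := by
      apply measure_biUnion_finset
      · intro i _ j _ hij
        exact hA'disj (Fin.val_injective.ne hij)
      · exact fun j _ => hA'meas _
    have hRHSne : μ' (⋃ j ∈ NK, A' (j:ℕ)) + ENNReal.ofReal σ + ENNReal.ofReal (2*a*δ) ≠ ⊤ := by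
      apply ENNReal.add_ne_top.2
      constructor
      · exact ENNReal.add_ne_top.2 ⟨measure_ne_top _ _, ENNReal.ofReal_ne_top⟩
      · exact ENNReal.ofReal_ne_top
    have htr := ENNReal.toReal_mono hRHSne hEN
    rw [hμS] at htr
    rw [ENNReal.toReal_add (ENNReal.add_ne_top.2 ⟨measure_ne_top _ _, ENNReal.ofReal_ne_top⟩)
      ENNReal.ofReal_ne_top, ENNReal.toReal_add (measure_ne_top _ _) ENNReal.ofReal_ne_top] at htr
    rw [ENNReal.toReal_ofReal hσ0.le, ENNReal.toReal_ofReal (by positivity : (0:ℝ) ≤ 2*a*δ)] at htr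
    rw [ENNReal.toReal_sum (fun i _ => measure_ne_top _ _)] at htr
    rw [hμNK, ENNReal.toReal_sum (fun j _ => measure_ne_top _ _)] at htr
    calc ∑ i ∈ K, u i = ∑ i ∈ K, (μ (A (i:ℕ))).toReal := rfl
      _ ≤ (∑ j ∈ NK, (μ' (A' (j:ℕ))).toReal) + σ + 2*a*δ := htr
      _ = (∑ j ∈ NK, v j) + (2*a*δ + σ) := by rw [hv]; ring
  -- apply the flow lemma
  obtain ⟨w, hw0, hwsupp, hwrow, hwcol, hwtot⟩ :=
    realFlow u v hu0 hv0 E (2*a*δ + σ) σ (by positivity) hσ0 hHall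
  -- normalized piece measures
  set μc : Fin M₁ → Measure X := fun i =>
    if μ (A (i:ℕ)) = 0 then 0 else (μ (A (i:ℕ)))⁻¹ • μ.restrict (A (i:ℕ)) with hμc
  set μc' : Fin M₂ → Measure X' := fun j =>
    if μ' (A' (j:ℕ)) = 0 then 0 else (μ' (A' (j:ℕ)))⁻¹ • μ'.restrict (A' (j:ℕ)) with hμc'
  have hμcuniv : ∀ i, μc i Set.univ ≤ 1 := by
    intro i
    rw [hμc]
    dsimp only
    split_ifs with h
    · simp
    · simp only [Measure.smul_apply, Measure.restrict_apply MeasurableSet.univ,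
        Set.univ_inter, smul_eq_mul]
      rw [ENNReal.inv_mul_cancel h (measure_ne_top _ _)]
  have hμc'univ : ∀ j, μc' j Set.univ ≤ 1 := by
    intro j
    rw [hμc']
    dsimp only
    split_ifs with h
    · simp
    · simp only [Measure.smul_apply, Measure.restrict_apply MeasurableSet.univ,
        Set.univ_inter, smul_eq_mul]
      rw [ENNReal.inv_mul_cancel h (measure_ne_top _ _)]
  haveI hμcfin : ∀ i, IsFiniteMeasure (μc i) := by
    intro i
    constructor
    exact lt_of_le_of_lt (hμcuniv i) ENNReal.one_lt_top
  haveI hμc'fin : ∀ j, IsFiniteMeasure (μc' j) := by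
    intro j
    constructor
    exact lt_of_le_of_lt (hμc'univ j) ENNReal.one_lt_top
  set ν₀ : Measure (X × X') :=
    ∑ i : Fin M₁, ∑ j : Fin M₂, (ENNReal.ofReal (w i j)) • ((μc i).prod (μc' j)) with hν₀
  -- row sums of W
  have hWrow : ∀ i, ∑ j : Fin M₂, ENNReal.ofReal (w i j) ≤ μ (A (i:ℕ)) := by
    intro i
    rw [← ENNReal.ofReal_sum_of_nonneg (fun j _ => hw0 i j)]
    calc ENNReal.ofReal (∑ j, w i j) ≤ ENNReal.ofReal (u i) :=
          ENNReal.ofReal_le_ofReal (hwrow i)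
      _ = μ (A (i:ℕ)) := by rw [hu, ENNReal.ofReal_toReal (measure_ne_top _ _)]
  have hWcol : ∀ j, ∑ i : Fin M₁, ENNReal.ofReal (w i j) ≤ μ' (A' (j:ℕ)) := by
    intro j
    rw [← ENNReal.ofReal_sum_of_nonneg (fun i _ => hw0 i j)]
    calc ENNReal.ofReal (∑ i, w i j) ≤ ENNReal.ofReal (v j) :=
          ENNReal.ofReal_le_ofReal (hwcol j)
      _ = μ' (A' (j:ℕ)) := by rw [hv, ENNReal.ofReal_toReal (measure_ne_top _ _)]
  -- scaled piece bound
  have hμcA : ∀ (i : Fin M₁) (s : Set X), MeasurableSet s → μ (A (i:ℕ)) * μc i s ≤ μ (s ∩ A (i:ℕ)) := by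
    intro i s hs
    rw [hμc]
    dsimp only
    split_ifs with h
    · simp
    · simp only [Measure.smul_apply, smul_eq_mul, Measure.restrict_apply hs]
      rw [← mul_assoc, ENNReal.mul_inv_cancel h (measure_ne_top _ _), one_mul]
  have hμc'A : ∀ (j : Fin M₂) (s : Set X'), MeasurableSet s →
      μ' (A' (j:ℕ)) * μc' j s ≤ μ' (s ∩ A' (j:ℕ)) := by
    intro j s hs
    rw [hμc']
    dsimp only
    split_ifs with h
    · simp
    · simp only [Measure.smul_apply, smul_eq_mul, Measure.restrict_apply hs]
      rw [← mul_assoc, ENNReal.mul_inv_cancel h (measure_ne_top _ _), one_mul]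
  -- marginal bounds
  have hfstle : ν₀.map Prod.fst ≤ μ := by
    rw [Measure.le_iff]
    intro s hs
    rw [hν₀, map_finsetSum' _ _ measurable_fst]
    rw [Measure.finset_sum_apply]
    have hterm : ∀ i : Fin M₁,
        ((∑ j : Fin M₂, (ENNReal.ofReal (w i j)) • ((μc i).prod (μc' j))).map Prod.fst) s
          ≤ μ (s ∩ A (i:ℕ)) := by
      intro i
      rw [map_finsetSum' _ _ measurable_fst, Measure.finset_sum_apply]
      have : ∀ j : Fin M₂,
          (((ENNReal.ofReal (w i j)) • ((μc i).prod (μc' j))).map Prod.fst) s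
            ≤ ENNReal.ofReal (w i j) * μc i s := by
        intro j
        rw [Measure.map_smul, Measure.map_fst_prod]
        simp only [Measure.smul_apply, smul_eq_mul]
        calc ENNReal.ofReal (w i j) * (μc' j Set.univ * μc i s)
            ≤ ENNReal.ofReal (w i j) * (1 * μc i s) := by
              apply mul_le_mul_right
              exact mul_le_mul_left (hμc'univ j) _
          _ = ENNReal.ofReal (w i j) * μc i s := by rw [one_mul]
      calc ∑ j : Fin M₂, (((ENNReal.ofReal (w i j)) • ((μc i).prod (μc' j))).map Prod.fst) s
          ≤ ∑ j : Fin M₂, ENNReal.ofReal (w i j) * μc i s := Finset.sum_le_sum (fun j _ => this j)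
        _ = (∑ j : Fin M₂, ENNReal.ofReal (w i j)) * μc i s := by rw [Finset.sum_mul]
        _ ≤ μ (A (i:ℕ)) * μc i s := mul_le_mul_left (hWrow i) _
        _ ≤ μ (s ∩ A (i:ℕ)) := hμcA i s hs
    calc ∑ i : Fin M₁, ((∑ j : Fin M₂, (ENNReal.ofReal (w i j)) • ((μc i).prod (μc' j))).map
          Prod.fst) s
        ≤ ∑ i : Fin M₁, μ (s ∩ A (i:ℕ)) := Finset.sum_le_sum (fun i _ => hterm i)
      _ = μ (⋃ i ∈ (Finset.univ : Finset (Fin M₁)), s ∩ A (i:ℕ)) := by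
          rw [measure_biUnion_finset]
          · intro i _ j _ hij
            exact Disjoint.mono Set.inter_subset_right Set.inter_subset_right
              (hAdisj (Fin.val_injective.ne hij))
          · exact fun i _ => hs.inter (hAmeas _)
      _ ≤ μ s := by
          apply measure_mono
          intro x hx
          obtain ⟨i, hi⟩ := Set.mem_iUnion.1 hx
          obtain ⟨_, hxi⟩ := Set.mem_iUnion.1 hi
          exact hxi.1
  have hsndle : ν₀.map Prod.snd ≤ μ' := by
    rw [Measure.le_iff]
    intro s hs
    rw [hν₀, map_finsetSum' _ _ measurable_snd]
    rw [Measure.finset_sum_apply]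
    have hterm : ∀ i : Fin M₁,
        ((∑ j : Fin M₂, (ENNReal.ofReal (w i j)) • ((μc i).prod (μc' j))).map Prod.snd) s
          ≤ ∑ j : Fin M₂, ENNReal.ofReal (w i j) * μc' j s := by
      intro i
      rw [map_finsetSum' _ _ measurable_snd, Measure.finset_sum_apply]
      apply Finset.sum_le_sum
      intro j _
      rw [Measure.map_smul, Measure.map_snd_prod]
      simp only [Measure.smul_apply, smul_eq_mul]
      calc ENNReal.ofReal (w i j) * (μc i Set.univ * μc' j s)
          ≤ ENNReal.ofReal (w i j) * (1 * μc' j s) := by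
            apply mul_le_mul_right
            exact mul_le_mul_left (hμcuniv i) _
        _ = ENNReal.ofReal (w i j) * μc' j s := by rw [one_mul]
    calc ∑ i : Fin M₁, ((∑ j : Fin M₂, (ENNReal.ofReal (w i j)) • ((μc i).prod (μc' j))).map
          Prod.snd) s
        ≤ ∑ i : Fin M₁, ∑ j : Fin M₂, ENNReal.ofReal (w i j) * μc' j s :=
          Finset.sum_le_sum (fun i _ => hterm i)
      _ = ∑ j : Fin M₂, (∑ i : Fin M₁, ENNReal.ofReal (w i j)) * μc' j s := by
          rw [Finset.sum_comm]
          exact Finset.sum_congr rfl (fun j _ => by rw [Finset.sum_mul])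
      _ ≤ ∑ j : Fin M₂, μ' (s ∩ A' (j:ℕ)) := by
          apply Finset.sum_le_sum
          intro j _
          calc (∑ i : Fin M₁, ENNReal.ofReal (w i j)) * μc' j s
              ≤ μ' (A' (j:ℕ)) * μc' j s := mul_le_mul_left (hWcol j) _
            _ ≤ μ' (s ∩ A' (j:ℕ)) := hμc'A j s hs
      _ = μ' (⋃ j ∈ (Finset.univ : Finset (Fin M₂)), s ∩ A' (j:ℕ)) := by
          rw [measure_biUnion_finset]
          · intro i _ j _ hij
            exact Disjoint.mono Set.inter_subset_right Set.inter_subset_right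
              (hA'disj (Fin.val_injective.ne hij))
          · exact fun j _ => hs.inter (hA'meas _)
      _ ≤ μ' s := by
          apply measure_mono
          intro x hx
          obtain ⟨j, hj⟩ := Set.mem_iUnion.1 hx
          obtain ⟨_, hxj⟩ := Set.mem_iUnion.1 hj
          exact hxj.1
  -- lower bound on ν₀ R
  have hν₀R : ENNReal.ofReal (∑ i : Fin M₁, ∑ j : Fin M₂, w i j) ≤ ν₀ R := by
    rw [hν₀, Measure.finset_sum_apply]
    rw [ENNReal.ofReal_sum_of_nonneg (fun i _ => Finset.sum_nonneg (fun j _ => hw0 i j))]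
    apply Finset.sum_le_sum
    intro i _
    rw [Measure.finset_sum_apply]
    rw [ENNReal.ofReal_sum_of_nonneg (fun j _ => hw0 i j)]
    apply Finset.sum_le_sum
    intro j _
    rcases eq_or_ne (w i j) 0 with h0 | h0
    · simp [h0]
    · have hEij : E i j := hwsupp i j h0
      have hwpos : 0 < w i j := lt_of_le_of_ne (hw0 i j) (Ne.symm h0)
      have hui : 0 < u i := lt_of_lt_of_le hwpos
        (le_trans (Finset.single_le_sum (fun j _ => hw0 i j) (Finset.mem_univ j)) (hwrow i))
      have hvj : 0 < v j := lt_of_lt_of_le hwpos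
        (le_trans (Finset.single_le_sum (fun i _ => hw0 i j) (Finset.mem_univ i)) (hwcol j))
      have hμAi : μ (A (i:ℕ)) ≠ 0 := by
        intro h
        rw [hu] at hui
        simp [h] at hui
      have hμA'j : μ' (A' (j:ℕ)) ≠ 0 := by
        intro h
        rw [hv] at hvj
        simp [h] at hvj
      have hrect : A (i:ℕ) ×ˢ A' (j:ℕ) ⊆ R := by
        rintro ⟨x, x'⟩ ⟨hx, hx'⟩
        obtain ⟨x₀, hx₀, x₀', hx₀', hd⟩ := hEij
        rw [hR]
        simp only [Set.mem_setOf_eq]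
        have h1 : dist (φ x) (φ x₀) ≤ ζ/16 := by
          rw [hφ.dist_eq]
          exact hAdiam _ x hx x₀ hx₀
        have h2 : dist (φ' x₀') (φ' x') ≤ ζ/16 := by
          rw [hφ'.dist_eq]
          exact hA'diam _ x₀' hx₀' x' hx'
        calc dist (φ x) (φ' x') ≤ dist (φ x) (φ x₀) + dist (φ x₀) (φ' x₀')
              + dist (φ' x₀') (φ' x') := dist_triangle4 _ _ _ _
          _ ≤ ζ/16 + (δ + ζ/4) + ζ/16 := by linarith
          _ ≤ δ + ζ/2 := by linarith
      have hμci : μc i (A (i:ℕ)) = 1 := by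
        rw [hμc]
        dsimp only
        simp only [hμAi, if_false]
        simp only [Measure.smul_apply, smul_eq_mul, Measure.restrict_apply (hAmeas _)]
        rw [Set.inter_self, ENNReal.inv_mul_cancel hμAi (measure_ne_top _ _)]
      have hμc'j : μc' j (A' (j:ℕ)) = 1 := by
        rw [hμc']
        dsimp only
        simp only [hμA'j, if_false]
        simp only [Measure.smul_apply, smul_eq_mul, Measure.restrict_apply (hA'meas _)]
        rw [Set.inter_self, ENNReal.inv_mul_cancel hμA'j (measure_ne_top _ _)]
      calc ENNReal.ofReal (w i j) = ENNReal.ofReal (w i j) * 1 := by rw [mul_one]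
        _ = ENNReal.ofReal (w i j) * (μc i (A (i:ℕ)) * μc' j (A' (j:ℕ))) := by
            rw [hμci, hμc'j, one_mul]
        _ = ENNReal.ofReal (w i j) * (((μc i).prod (μc' j)) (A (i:ℕ) ×ˢ A' (j:ℕ))) := by
            rw [Measure.prod_prod]
        _ ≤ ENNReal.ofReal (w i j) * (((μc i).prod (μc' j)) R) :=
            mul_le_mul_right (measure_mono hrect) _
        _ = ((ENNReal.ofReal (w i j)) • ((μc i).prod (μc' j))) R := by
            simp [Measure.smul_apply]
  -- sum of u
  have hsumu : 1 - σ ≤ ∑ i : Fin M₁, u i := by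
    have hU : μ (⋃ i ∈ Finset.range M₁, A i) = ∑ i ∈ Finset.range M₁, μ (A i) := by
      apply measure_biUnion_finset
      · intro i _ j _ hij
        exact hAdisj hij
      · exact fun i _ => hAmeas _
    have hsum : ∑ i : Fin M₁, u i = (μ (⋃ i ∈ Finset.range M₁, A i)).toReal := by
      rw [hU, ENNReal.toReal_sum (fun i _ => measure_ne_top _ _)]
      rw [Finset.sum_range fun i => (μ (A i)).toReal]
    rw [hsum]
    rcases le_total 1 σ with h | h
    · calc 1 - σ ≤ 0 := by linarith
        _ ≤ _ := ENNReal.toReal_nonneg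
    · have := ENNReal.toReal_mono (measure_ne_top _ _) hM₁
      rw [ENNReal.toReal_sub_of_le (by simpa using h) ENNReal.one_ne_top] at this
      rw [ENNReal.toReal_one, ENNReal.toReal_ofReal hσ0.le] at this
      exact this
  -- build the coupling
  obtain ⟨ν, hνprob, hνfst, hνsnd, hνge⟩ := completion μ μ' ν₀ hfstle hsndle
  refine ⟨R, ν, hRmeas, hνprob, hνfst, hνsnd, ?_, ?_⟩
  · -- mass bound
    have hq : 1 - σ - (2*a*δ + σ) - σ ≤ ∑ i : Fin M₁, ∑ j : Fin M₂, w i j := by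
      have := hwtot
      linarith
    have h1 : ENNReal.ofReal (1 - (2*a*δ + 3*σ)) ≤ ν R := by
      calc ENNReal.ofReal (1 - (2*a*δ + 3*σ))
          ≤ ENNReal.ofReal (∑ i : Fin M₁, ∑ j : Fin M₂, w i j) := by
            apply ENNReal.ofReal_le_ofReal
            linarith
        _ ≤ ν₀ R := hν₀R
        _ ≤ ν R := hνge R
    calc 1 - ENNReal.ofReal (a * (2*δ + ζ))
        ≤ 1 - ENNReal.ofReal (2*a*δ + 3*σ) := by
          apply tsub_le_tsub_left
          apply ENNReal.ofReal_le_ofReal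
          rw [hσdef]
          nlinarith
      _ = ENNReal.ofReal 1 - ENNReal.ofReal (2*a*δ + 3*σ) := by rw [ENNReal.ofReal_one]
      _ = ENNReal.ofReal (1 - (2*a*δ + 3*σ)) := by
          rw [ENNReal.ofReal_sub _ (by positivity)]
      _ ≤ ν R := h1
  · -- distortion
    rintro ⟨p1, p2⟩ hp ⟨q1, q2⟩ hq
    rw [hR] at hp hq
    simp only [Set.mem_setOf_eq] at hp hq
    have h1 : dist p1 q1 = dist (φ p1) (φ q1) := (hφ.dist_eq _ _).symm
    have h2 : dist p2 q2 = dist (φ' p2) (φ' q2) := (hφ'.dist_eq _ _).symm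
    rw [h1, h2]
    have tri1 : dist (φ p1) (φ q1) ≤
        dist (φ p1) (φ' p2) + dist (φ' p2) (φ' q2) + dist (φ' q2) (φ q1) :=
      dist_triangle4 _ _ _ _
    have tri2 : dist (φ' p2) (φ' q2) ≤
        dist (φ' p2) (φ p1) + dist (φ p1) (φ q1) + dist (φ q1) (φ' q2) :=
      dist_triangle4 _ _ _ _
    have c1 : dist (φ' q2) (φ q1) = dist (φ q1) (φ' q2) := dist_comm _ _
    have c2 : dist (φ' p2) (φ p1) = dist (φ p1) (φ' p2) := dist_comm _ _
    rw [abs_sub_le_iff]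
    constructor <;> linarith


lemma box_to_gp {X : Type u} {X' : Type v}
    [MetricSpace X] [MeasurableSpace X] [BorelSpace X]
    [MetricSpace X'] [MeasurableSpace X'] [BorelSpace X']
    (μ : Measure X) (μ' : Measure X') [IsProbabilityMeasure μ] [IsProbabilityMeasure μ']
    {a ε : ℝ} (ha : 0 < a) (hε : 0 < ε)
    (R : Set (X × X')) (ν : Measure (X × X')) (hRmeas : MeasurableSet R)
    (hνprob : IsProbabilityMeasure ν) (hfst : ν.map Prod.fst = μ) (hsnd : ν.map Prod.snd = μ')
    (hmass : 1 - ENNReal.ofReal (a * ε) ≤ ν R)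
    (hdist : ∀ p ∈ R, ∀ q ∈ R, |dist p.1 q.1 - dist p.2 q.2| ≤ ε) :
    ∃ (Zm : Type (max u v)) (_ : MetricSpace Zm) (_ : MeasurableSpace Zm) (_ : BorelSpace Zm)
      (ψ : X → Zm) (ψ' : X' → Zm), Isometry ψ ∧ Isometry ψ' ∧
        prohorovLE (2*a) (ε/2) (μ.map ψ) (μ'.map ψ') := by
  have haε : 2*a*(ε/2) = a*ε := by ring
  rcases R.eq_empty_or_nonempty with rfl | hne
  · -- degenerate case : a * ε ≥ 1
    have hbig : (1 : ℝ≥0∞) ≤ ENNReal.ofReal (a*ε) := by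
      rw [measure_empty] at hmass
      have := tsub_le_iff_right.1 hmass
      rwa [zero_add] at this
    letI M : MetricSpace (X ⊕ X') := Metric.metricSpaceSum
    letI : MeasurableSpace (X ⊕ X') := borel _
    haveI : BorelSpace (X ⊕ X') := ⟨rfl⟩
    refine ⟨X ⊕ X', M, borel _, ⟨rfl⟩, Sum.inl, Sum.inr,
      Metric.isometry_inl, Metric.isometry_inr, ?_⟩
    intro B hB
    haveI : IsProbabilityMeasure (μ.map (Sum.inl : X → X ⊕ X')) :=
      Measure.isProbabilityMeasure_map continuous_inl.measurable.aemeasurable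
    haveI : IsProbabilityMeasure (μ'.map (Sum.inr : X' → X ⊕ X')) :=
      Measure.isProbabilityMeasure_map continuous_inr.measurable.aemeasurable
    constructor
    · calc (μ'.map Sum.inr) B ≤ 1 := prob_le_one
        _ ≤ ENNReal.ofReal (2*a*(ε/2)) := by rw [haε]; exact hbig
        _ ≤ _ := le_add_self
    · calc (μ.map Sum.inl) B ≤ 1 := prob_le_one
        _ ≤ ENNReal.ofReal (2*a*(ε/2)) := by rw [haε]; exact hbig
        _ ≤ _ := le_add_self
  · -- main case: glue the spaces along R
    haveI : Nonempty R := hne.to_subtype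
    set Φ : R → X := fun p => (p : X × X').1 with hΦ
    set Ψ : R → X' := fun p => (p : X × X').2 with hΨ
    have H : ∀ p q : R, |dist (Φ p) (Φ q) - dist (Ψ p) (Ψ q)| ≤ 2 * (ε/2) := by
      intro p q
      have := hdist p p.2 q q.2
      linarith
    letI M : MetricSpace (X ⊕ X') := Metric.glueMetricApprox Φ Ψ (ε/2) (by linarith) H
    letI : MeasurableSpace (X ⊕ X') := borel _
    haveI : BorelSpace (X ⊕ X') := ⟨rfl⟩
    have hinl : Isometry (Sum.inl : X → X ⊕ X') := Isometry.of_dist_eq fun _ _ => rfl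
    have hinr : Isometry (Sum.inr : X' → X ⊕ X') := Isometry.of_dist_eq fun _ _ => rfl
    have hglue : ∀ (x : X) (x' : X'), (x, x') ∈ R →
        dist (Sum.inl x : X ⊕ X') (Sum.inr x') = ε/2 := by
      intro x x' hmem
      exact Metric.glueDist_glued_points Φ Ψ (ε/2) ⟨(x, x'), hmem⟩
    have hcompl : ν Rᶜ ≤ ENNReal.ofReal (a*ε) := by
      haveI := hνprob
      rw [measure_compl hRmeas (measure_ne_top _ _), measure_univ]
      calc 1 - ν R ≤ 1 - (1 - ENNReal.ofReal (a*ε)) := tsub_le_tsub_left hmass 1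
        _ ≤ ENNReal.ofReal (a*ε) := by
            rw [tsub_le_iff_right]
            exact le_add_tsub
    refine ⟨X ⊕ X', M, borel _, ⟨rfl⟩, Sum.inl, Sum.inr, hinl, hinr, ?_⟩
    intro B hB
    have hcth : MeasurableSet (cthickening (ε/2) B) :=
      Metric.isClosed_cthickening.measurableSet
    have hinlm : Measurable (Sum.inl : X → X ⊕ X') := continuous_inl.measurable
    have hinrm : Measurable (Sum.inr : X' → X ⊕ X') := continuous_inr.measurable
    constructor
    · -- μ' side ≤ μ side
      rw [Measure.map_apply hinrm hB, Measure.map_apply hinlm hcth]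
      rw [← hsnd, Measure.map_apply measurable_snd (hinrm hB)]
      rw [← hfst, Measure.map_apply measurable_fst (hinlm hcth)]
      set T := Prod.snd ⁻¹' (Sum.inr ⁻¹' B : Set X') with hT
      have step1 : ν T ≤ ν (T ∩ R) + ν Rᶜ := by
        calc ν T ≤ ν (T ∩ R) + ν (T \ R) := measure_le_inter_add_diff _ _ _
          _ ≤ ν (T ∩ R) + ν Rᶜ := by
              apply add_le_add_right
              apply measure_mono
              intro p hp
              exact hp.2
      have step2 : T ∩ R ⊆ Prod.fst ⁻¹' (Sum.inl ⁻¹' cthickening (ε/2) B : Set X) := by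
        rintro ⟨x, x'⟩ ⟨hxT, hxR⟩
        have hd : dist (Sum.inl x : X ⊕ X') (Sum.inr x') = ε/2 := hglue x x' hxR
        refine Metric.mem_cthickening_of_edist_le _ (Sum.inr x') (ε/2) B hxT ?_
        rw [edist_dist, hd]
      calc ν T ≤ ν (T ∩ R) + ν Rᶜ := step1
        _ ≤ ν (Prod.fst ⁻¹' (Sum.inl ⁻¹' cthickening (ε/2) B)) + ENNReal.ofReal (2*a*(ε/2)) := by
            apply add_le_add (measure_mono step2)
            rw [haε]
            exact hcompl
    · -- μ side ≤ μ' side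
      rw [Measure.map_apply hinlm hB, Measure.map_apply hinrm hcth]
      rw [← hfst, Measure.map_apply measurable_fst (hinlm hB)]
      rw [← hsnd, Measure.map_apply measurable_snd (hinrm hcth)]
      set T := Prod.fst ⁻¹' (Sum.inl ⁻¹' B : Set X) with hT
      have step1 : ν T ≤ ν (T ∩ R) + ν Rᶜ := by
        calc ν T ≤ ν (T ∩ R) + ν (T \ R) := measure_le_inter_add_diff _ _ _
          _ ≤ ν (T ∩ R) + ν Rᶜ := by
              apply add_le_add_right
              apply measure_mono
              intro p hp
              exact hp.2
      have step2 : T ∩ R ⊆ Prod.snd ⁻¹' (Sum.inr ⁻¹' cthickening (ε/2) B : Set X') := by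
        rintro ⟨x, x'⟩ ⟨hxT, hxR⟩
        have hd : dist (Sum.inl x : X ⊕ X') (Sum.inr x') = ε/2 := hglue x x' hxR
        refine Metric.mem_cthickening_of_edist_le _ (Sum.inl x) (ε/2) B hxT ?_
        rw [edist_dist, dist_comm, hd]
      calc ν T ≤ ν (T ∩ R) + ν Rᶜ := step1
        _ ≤ ν (Prod.snd ⁻¹' (Sum.inr ⁻¹' cthickening (ε/2) B)) + ENNReal.ofReal (2*a*(ε/2)) := by
            apply add_le_add (measure_mono step2)
            rw [haε]
            exact hcompl


/-- `□_a(X,X') = 2 d_GP^{2a}(X,X')`. -/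
theorem stmt7 {X : Type u} {X' : Type v}
    [MetricSpace X] [CompleteSpace X] [TopologicalSpace.SeparableSpace X]
    [MeasurableSpace X] [BorelSpace X]
    [MetricSpace X'] [CompleteSpace X'] [TopologicalSpace.SeparableSpace X']
    [MeasurableSpace X'] [BorelSpace X']
    (μ : Measure X) (μ' : Measure X')
    [IsProbabilityMeasure μ] [IsProbabilityMeasure μ']
    (a : ℝ) (ha : 0 < a) :
    boxDist a μ μ' = 2 * gromovProhorov (2 * a) μ μ' := by

  classical
  set S : Set ℝ := {ε : ℝ | 0 < ε ∧ ∃ (R : Set (X × X')) (ν : Measure (X × X')),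
    MeasurableSet R ∧ IsProbabilityMeasure ν ∧
    ν.map Prod.fst = μ ∧ ν.map Prod.snd = μ' ∧
    1 - ENNReal.ofReal (a * ε) ≤ ν R ∧
    ∀ p ∈ R, ∀ q ∈ R, |dist p.1 q.1 - dist p.2 q.2| ≤ ε} with hSdef
  set T : Set ℝ := {ε : ℝ | 0 < ε ∧ ∃ (Z : Type (max u v)) (_ : MetricSpace Z)
    (_ : MeasurableSpace Z) (_ : BorelSpace Z) (φ : X → Z) (φ' : X' → Z),
    Isometry φ ∧ Isometry φ' ∧ prohorovLE (2 * a) ε (μ.map φ) (μ'.map φ')} with hTdef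
  have hbox : boxDist a μ μ' = sInf S := rfl
  have hgp : gromovProhorov (2 * a) μ μ' = sInf T := rfl
  have hSbdd : BddBelow S := ⟨0, fun ε hε => hε.1.le⟩
  have hTbdd : BddBelow T := ⟨0, fun ε hε => hε.1.le⟩
  have hSne : S.Nonempty := by
    refine ⟨1/a, by positivity, ∅, μ.prod μ', MeasurableSet.empty, inferInstance, ?_, ?_, ?_, ?_⟩
    · rw [Measure.map_fst_prod, measure_univ, one_smul]
    · rw [Measure.map_snd_prod, measure_univ, one_smul]
    · rw [measure_empty, mul_one_div_cancel ha.ne']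
      simp
    · rintro p hp
      exact absurd hp (Set.notMem_empty p)
  have hL1 : ∀ ε ∈ S, ε/2 ∈ T := by
    rintro ε ⟨hε, R, ν, hRmeas, hνprob, hfst, hsnd, hmass, hdist⟩
    obtain ⟨Zm, i1, i2, i3, ψ, ψ', hψ, hψ', hpro⟩ :=
      box_to_gp μ μ' ha hε R ν hRmeas hνprob hfst hsnd hmass hdist
    exact ⟨by linarith, Zm, i1, i2, i3, ψ, ψ', hψ, hψ', hpro⟩
  have hL2 : ∀ δ ∈ T, ∀ ζ : ℝ, 0 < ζ → (2*δ + ζ) ∈ S := by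
    rintro δ ⟨hδ, Zm, i1, i2, i3, ψ, ψ', hψ, hψ', hpro⟩ ζ hζ
    obtain ⟨R, ν, h1, h2, h3, h4, h5, h6⟩ := gp_to_box μ μ' ha hδ hζ hψ hψ' hpro
    exact ⟨by linarith, R, ν, h1, h2, h3, h4, h5, h6⟩
  obtain ⟨ε₀, hε₀⟩ := hSne
  have hTne : T.Nonempty := ⟨ε₀/2, hL1 ε₀ hε₀⟩
  rw [hbox, hgp]
  apply le_antisymm
  · have h1 : ∀ δ ∈ T, sInf S ≤ 2*δ := by
      intro δ hδT
      apply le_of_forall_pos_le_add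
      intro ζ hζ
      exact csInf_le hSbdd (hL2 δ hδT ζ hζ)
    have h2 : sInf S / 2 ≤ sInf T := le_csInf hTne (fun δ hδT => by linarith [h1 δ hδT])
    linarith
  · apply le_csInf ⟨ε₀, hε₀⟩
    intro ε hεS
    have := csInf_le hTbdd (hL1 ε hεS)
    linarith
end
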